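/- Let G be a finite group, N an abelian normal subgroup of G, and B : N → N → ℂˣ a G-invariant alternating bicharacter. Let a, b ∈ N, let α be a finite-dimensional complex representation of Z_a with χ_α(h) = B(a,h)·(dim α) for all h ∈ N, and let β be a finite-dimensional complex representation of Z_b with χ_β(h) = B(b,h)·(dim β) for all h ∈ N. Then (i) the set G(a,b) = {g ∈ G | a·(gbg⁻¹) = (gbg⁻¹)·a} is all of G, and (ii) the S-matrix entry S_{(a,α),(b,β)} := (|G|/(|Z_a|·|Z_b|)) · Σ_{g ∈ G(a,b)} conj(χ_α(gbg⁻¹)) · conj(χ_β(g⁻¹ag)) equals |C_a|·(dim α)·|C_b|·(dim β), where C_a and C_b are the conjugacy classes of a and b. -/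

import Mathlib

open scoped Classical

/-- The character of a representation `α` of the centralizer of `a`, extended by zero
to a function on all of `G`. -/
noncomputable def chiExt {G V : Type*} [Group G] [AddCommGroup V] [Module ℂ V]
    (a : G) (α : Representation ℂ (Subgroup.centralizer {a}) V) (x : G) : ℂ :=
  if hx : x ∈ Subgroup.centralizer {a} then LinearMap.trace ℂ V (α ⟨x, hx⟩) else 0

lemma card_conj_mul_card_centralizer {G : Type*} [Group G] [Fintype G] (a : G) :
    Nat.card {x : G | IsConj a x} * Nat.card (Subgroup.centralizer ({a} : Set G)) =
      Fintype.card G := by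
  have e1 : {x : G | IsConj a x} = MulAction.orbit (ConjAct G) a := by
    ext x
    simp only [Set.mem_setOf_eq, ConjAct.mem_orbit_conjAct]
    exact isConj_comm
  have e2 : (Subgroup.centralizer ({a} : Set G)) ≃
      (MulAction.stabilizer (ConjAct G) a) := by
    refine Equiv.subtypeEquiv ConjAct.toConjAct.toEquiv ?_
    intro x
    rw [Subgroup.centralizer_eq_comap_stabilizer]
    rfl
  rw [e1, Nat.card_congr e2, Nat.card_eq_fintype_card, Nat.card_eq_fintype_card,
    MulAction.card_orbit_mul_card_stabilizer_eq_card_group (ConjAct G) a]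
  rfl

/-- in the situation of a `G`-invariant alternating bicharacter `B` on an
abelian normal subgroup `N` of a finite group `G`, with `a, b ∈ N` and representations
`α` of `Z_a`, `β` of `Z_b` whose characters restrict on `N` to `B(a,·)·dim α` resp.
`B(b,·)·dim β`:
(i) the set `G(a,b) = {g | a·(g b g⁻¹) = (g b g⁻¹)·a}` is all of `G`, and
(ii) the S-matrix entry `(|G|/(|Z_a|·|Z_b|)) · Σ_{g ∈ G(a,b)} conj χ_α(g b g⁻¹) · conj χ_β(g⁻¹ a g)`
equals `|C_a|·dim α · |C_b|·dim β`. -/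
theorem smatrix_eq_dims {G : Type*} [Group G] [Fintype G]
    (N : Subgroup G) (hN : N.Normal) (hcomm : ∀ x ∈ N, ∀ y ∈ N, x * y = y * x)
    (B : ↥N → ↥N → ℂˣ)
    (hB1 : ∀ h₁ h₂ h : ↥N, B (h₁ * h₂) h = B h₁ h * B h₂ h)
    (hB2 : ∀ h h₁ h₂ : ↥N, B h (h₁ * h₂) = B h h₁ * B h h₂)
    (hB3 : ∀ h : ↥N, B h h = 1)
    (hBinv : ∀ (g : G) (h₁ h₂ : ↥N),
      B ⟨g * (h₁ : G) * g⁻¹, hN.conj_mem (h₁ : G) h₁.2 g⟩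
        ⟨g * (h₂ : G) * g⁻¹, hN.conj_mem (h₂ : G) h₂.2 g⟩ = B h₁ h₂)
    {V W : Type*} [AddCommGroup V] [Module ℂ V] [FiniteDimensional ℂ V]
    [AddCommGroup W] [Module ℂ W] [FiniteDimensional ℂ W]
    (a b : G) (ha : a ∈ N) (hb : b ∈ N)
    (α : Representation ℂ (Subgroup.centralizer {a}) V)
    (β : Representation ℂ (Subgroup.centralizer {b}) W)
    (hχα : ∀ h : ↥N, chiExt a α (h : G) = (B ⟨a, ha⟩ h : ℂ) * (Module.finrank ℂ V : ℂ))
    (hχβ : ∀ h : ↥N, chiExt b β (h : G) = (B ⟨b, hb⟩ h : ℂ) * (Module.finrank ℂ W : ℂ)) :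
    {g : G | a * (g * b * g⁻¹) = (g * b * g⁻¹) * a} = Set.univ ∧
    ((Fintype.card G : ℂ) /
        ((Nat.card (Subgroup.centralizer {a} : Subgroup G) : ℂ) *
          (Nat.card (Subgroup.centralizer {b} : Subgroup G) : ℂ))) *
      ∑ g ∈ Finset.univ.filter (fun g : G => a * (g * b * g⁻¹) = (g * b * g⁻¹) * a),
        (starRingEnd ℂ) (chiExt a α (g * b * g⁻¹)) * (starRingEnd ℂ) (chiExt b β (g⁻¹ * a * g)) =
      (Nat.card {x : G | IsConj a x} : ℂ) * (Module.finrank ℂ V : ℂ) *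
        ((Nat.card {x : G | IsConj b x} : ℂ) * (Module.finrank ℂ W : ℂ)) := by
  have hcond : ∀ g : G, a * (g * b * g⁻¹) = (g * b * g⁻¹) * a :=
    fun g => hcomm a ha _ (hN.conj_mem b hb g)
  constructor
  · ext g; simp [hcond g]
  have hfilter : Finset.univ.filter (fun g : G => a * (g * b * g⁻¹) = (g * b * g⁻¹) * a)
      = Finset.univ := Finset.filter_true_of_mem (fun g _ => hcond g)
  rw [hfilter]
  have hterm : ∀ g : G,
      (starRingEnd ℂ) (chiExt a α (g * b * g⁻¹)) * (starRingEnd ℂ) (chiExt b β (g⁻¹ * a * g))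
        = (Module.finrank ℂ V : ℂ) * (Module.finrank ℂ W : ℂ) := by
    intro g
    have hcmem : g * b * g⁻¹ ∈ N := hN.conj_mem b hb g
    have hdmem : g⁻¹ * a * g ∈ N := by
      have := hN.conj_mem a ha g⁻¹
      simpa [mul_assoc] using this
    set c : ↥N := ⟨g * b * g⁻¹, hcmem⟩ with hc
    set d : ↥N := ⟨g⁻¹ * a * g, hdmem⟩ with hd
    have h1 : B ⟨b, hb⟩ d = B c ⟨a, ha⟩ := by
      rw [← hBinv g ⟨b, hb⟩ d]
      congr 1
      exact Subtype.ext (by simp only [hd]; group)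
    have h2 : B ⟨a, ha⟩ c * B c ⟨a, ha⟩ = 1 := by
      have h3 := hB3 (⟨a, ha⟩ * c)
      rw [hB1, hB2, hB2, hB3, hB3] at h3
      rw [one_mul, mul_one] at h3
      exact h3
    have hα := hχα c
    have hβ := hχβ d
    rw [show chiExt a α (g * b * g⁻¹) = chiExt a α ((c : G)) from rfl, hα,
      show chiExt b β (g⁻¹ * a * g) = chiExt b β ((d : G)) from rfl, hβ, h1]
    rw [map_mul, map_mul, Complex.conj_natCast, Complex.conj_natCast]
    have h4 : (starRingEnd ℂ) ((B ⟨a, ha⟩ c : ℂ)) * (starRingEnd ℂ) ((B c ⟨a, ha⟩ : ℂ)) = 1 := by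
      rw [← map_mul, ← Units.val_mul, h2, Units.val_one, map_one]
    calc (starRingEnd ℂ) ((B ⟨a, ha⟩ c : ℂ)) * (Module.finrank ℂ V : ℂ) *
          ((starRingEnd ℂ) ((B c ⟨a, ha⟩ : ℂ)) * (Module.finrank ℂ W : ℂ))
        = ((starRingEnd ℂ) ((B ⟨a, ha⟩ c : ℂ)) * (starRingEnd ℂ) ((B c ⟨a, ha⟩ : ℂ))) *
          ((Module.finrank ℂ V : ℂ) * (Module.finrank ℂ W : ℂ)) := by ring
      _ = (Module.finrank ℂ V : ℂ) * (Module.finrank ℂ W : ℂ) := by rw [h4, one_mul]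
  rw [Finset.sum_congr rfl (fun g _ => hterm g), Finset.sum_const, Finset.card_univ,
    nsmul_eq_mul]
  have hA : (Nat.card {x : G | IsConj a x} : ℂ) *
      (Nat.card (Subgroup.centralizer ({a} : Set G)) : ℂ) = (Fintype.card G : ℂ) := by
    exact_mod_cast congrArg (Nat.cast : ℕ → ℂ) (card_conj_mul_card_centralizer a)
  have hB' : (Nat.card {x : G | IsConj b x} : ℂ) *
      (Nat.card (Subgroup.centralizer ({b} : Set G)) : ℂ) = (Fintype.card G : ℂ) := by
    exact_mod_cast congrArg (Nat.cast : ℕ → ℂ) (card_conj_mul_card_centralizer b)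
  have hZa : (Nat.card (Subgroup.centralizer ({a} : Set G)) : ℂ) ≠ 0 :=
    Nat.cast_ne_zero.mpr Nat.card_pos.ne'
  have hZb : (Nat.card (Subgroup.centralizer ({b} : Set G)) : ℂ) ≠ 0 :=
    Nat.cast_ne_zero.mpr Nat.card_pos.ne'
  rw [div_mul_eq_mul_div, div_eq_iff (mul_ne_zero hZa hZb)]
  linear_combination -(Module.finrank ℂ V : ℂ) * (Module.finrank ℂ W : ℂ) *
      ((Nat.card {x : G | IsConj b x} : ℂ) *
        (Nat.card (Subgroup.centralizer ({b} : Set G)) : ℂ)) * hA -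
    (Module.finrank ℂ V : ℂ) * (Module.finrank ℂ W : ℂ) * (Fintype.card G : ℂ) * hB'
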